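/- Let F = A[T₁,…,T_r] be a polynomial ring over a ring A in which n! is invertible, and let W ⊂ F be the A-submodule spanned by monomials of total degree less than n. Then the ideal of norms I_W equals the ideal of norms I_F in Γⁿ_A(F). -/

import Mathlib

/-- `δ(x,y) ∈ Γⁿ_A(F)`, where `p1` records the external product `γ¹(z 1) * ⋯ * γ¹(z n)`. -/
noncomputable def extDelta {A F Γn : Type*} [CommRing A] [CommRing F] [Algebra A F]
    [CommRing Γn] [Algebra A Γn] {n : ℕ}
    (p1 : MultilinearMap A (fun _ : Fin n => F) Γn) (x y : Fin n → F) : Γn :=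
  ∑ σ : Equiv.Perm (Fin n),
    ((Equiv.Perm.sign σ : ℤ)) • p1 (fun i => x i * y (σ i))

/-- The ideal of norms `I_V ⊆ Γⁿ_A(F)` associated to an `A`-submodule `V ⊆ F`. -/
noncomputable def normIdeal {A F Γn : Type*} [CommRing A] [CommRing F] [Algebra A F]
    [CommRing Γn] [Algebra A Γn] {n : ℕ}
    (p1 : MultilinearMap A (fun _ : Fin n => F) Γn) (V : Submodule A F) : Ideal Γn :=
  Ideal.span {t | ∃ x y : Fin n → F,
    (∀ i, x i ∈ V) ∧ (∀ i, y i ∈ V) ∧ t = extDelta p1 x y}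

section AuxDelta

variable {A F Γn : Type*} [CommRing A] [CommRing F] [Algebra A F]
    [CommRing Γn] [Algebra A Γn] {n : ℕ}
    (p1 : MultilinearMap A (fun _ : Fin n => F) Γn)

/-- `extDelta` as a multilinear map in the first tuple. -/
noncomputable def deltaML (y : Fin n → F) : MultilinearMap A (fun _ : Fin n => F) Γn :=
  ∑ σ : Equiv.Perm (Fin n),
    ((Equiv.Perm.sign σ : ℤ)) • p1.compLinearMap (fun i => LinearMap.mulRight A (y (σ i)))

theorem deltaML_apply (x y : Fin n → F) : deltaML p1 y x = extDelta p1 x y := by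
  simp [deltaML, extDelta]

theorem extDelta_swap
    (hsym : ∀ (σ : Equiv.Perm (Fin n)) (z : Fin n → F), p1 (z ∘ σ) = p1 z)
    (x y : Fin n → F) : extDelta p1 x y = extDelta p1 y x := by
  unfold extDelta
  rw [← Equiv.sum_comp (Equiv.inv (Equiv.Perm (Fin n)))]
  refine Finset.sum_congr rfl fun σ _ => ?_
  have h1 : (Equiv.inv (Equiv.Perm (Fin n)) σ) = σ⁻¹ := rfl
  rw [h1, Equiv.Perm.sign_inv]
  congr 1
  have : (fun i => x i * y (σ⁻¹ i)) = (fun k => y k * x (σ k)) ∘ ⇑(σ⁻¹) := by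
    funext i
    simp [mul_comm]
  rw [this, hsym σ⁻¹]

theorem q_mul_extDelta (q : ℕ → F → Γn)
    (hq : ∀ (c : ℕ), c ≤ n → ∀ (f : F) (w : Fin n → F),
      q c f * p1 w =
        ∑ S ∈ Finset.univ.powersetCard c,
          p1 fun i => (if i ∈ S then f else 1) * w i)
    {k : ℕ} (hk : k ≤ n) (f : F) (x y : Fin n → F) :
    q k f * extDelta p1 x y =
      ∑ S ∈ Finset.univ.powersetCard k,
        extDelta p1 (fun i => (if i ∈ S then f else 1) * x i) y := by
  unfold extDelta
  rw [Finset.mul_sum]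
  have step : ∀ σ : Equiv.Perm (Fin n),
      q k f * ((Equiv.Perm.sign σ : ℤ) • p1 (fun i => x i * y (σ i)))
        = ∑ S ∈ Finset.univ.powersetCard k, (Equiv.Perm.sign σ : ℤ) •
            p1 (fun i => ((if i ∈ S then f else 1) * x i) * y (σ i)) := by
    intro σ
    rw [mul_smul_comm, hq k hk f, Finset.smul_sum]
    refine Finset.sum_congr rfl fun S _ => ?_
    congr 1
    apply congrArg
    funext i
    ring
  rw [Finset.sum_congr rfl fun σ _ => step σ]
  exact Finset.sum_comm

theorem star0 (x y : Fin n → F) (j : Fin n) (L g : F) :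
    ∑ S ∈ (Finset.univ : Finset (Fin n)).powerset, (-1 : ℤ) ^ S.card •
      extDelta p1
        (fun i => (if i ∈ S then L else 1) * Function.update x j (L ^ (n - S.card) * g) i) y
      = 0 := by
  classical
  have hins : (Finset.univ : Finset (Fin n)) = insert j (Finset.univ.erase j) :=
    (Finset.insert_erase (Finset.mem_univ j)).symm
  rw [hins, Finset.sum_powerset_insert (Finset.notMem_erase j _)]
  rw [← Finset.sum_add_distrib]
  refine Finset.sum_eq_zero fun S hS => ?_
  have hjS : j ∉ S := fun h =>
    Finset.notMem_erase j _ (Finset.mem_powerset.mp hS h)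
  have hcard : S.card ≤ n - 1 := by
    have := Finset.card_le_card (Finset.mem_powerset.mp hS)
    simpa [Finset.card_erase_of_mem] using this
  have hn1 : 1 ≤ n := by
    have : j.val < n := j.isLt
    omega
  have hcardlt : S.card < n := by omega
  have hci : (insert j S).card = S.card + 1 := Finset.card_insert_of_notMem hjS
  have htuple :
      (fun i => (if i ∈ insert j S then L else 1) *
        Function.update x j (L ^ (n - (insert j S).card) * g) i)
      = (fun i => (if i ∈ S then L else 1) *
        Function.update x j (L ^ (n - S.card) * g) i) := by
    funext i
    by_cases hij : i = j
    · subst hij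
      rw [hci]
      simp only [Function.update_self]
      rw [if_pos (Finset.mem_insert_self _ S), if_neg hjS, one_mul, ← mul_assoc, ← pow_succ']
      congr 2
      omega
    · simp only [Function.update_of_ne hij, Finset.mem_insert]
      have : (i ∈ insert j S) = (i ∈ S) := by
        simp [Finset.mem_insert, hij]
      simp [hij]
  rw [htuple, hci, pow_succ]
  ring_nf

theorem star (q : ℕ → F → Γn)
    (hq : ∀ (c : ℕ), c ≤ n → ∀ (f : F) (w : Fin n → F),
      q c f * p1 w =
        ∑ S ∈ Finset.univ.powersetCard c,
          p1 fun i => (if i ∈ S then f else 1) * w i)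
    (x y : Fin n → F) (j : Fin n) (L g : F) :
    extDelta p1 (Function.update x j (L ^ n * g)) y =
      ∑ k ∈ Finset.Icc 1 n, (-1 : ℤ) ^ (k + 1) •
        (q k L * extDelta p1 (Function.update x j (L ^ (n - k) * g)) y) := by
  classical
  have h0 := star0 p1 x y j L g
  rw [Finset.sum_powerset] at h0
  have hcardu : (Finset.univ : Finset (Fin n)).card = n := by simp
  rw [hcardu] at h0
  have hk : ∀ k ∈ Finset.range (n+1),
      (∑ S ∈ Finset.univ.powersetCard k, (-1 : ℤ) ^ S.card •
        extDelta p1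
          (fun i => (if i ∈ S then L else 1) *
            Function.update x j (L ^ (n - S.card) * g) i) y)
      = (-1 : ℤ) ^ k •
          ∑ S ∈ Finset.univ.powersetCard k,
            extDelta p1
              (fun i => (if i ∈ S then L else 1) *
                Function.update x j (L ^ (n - k) * g) i) y := by
    intro k _
    rw [Finset.smul_sum]
    refine Finset.sum_congr rfl fun S hS => ?_
    have hc : S.card = k := (Finset.mem_powersetCard_univ.mp hS)
    rw [hc]
  rw [Finset.sum_congr rfl hk] at h0
  have hrange : Finset.range (n+1) = insert 0 (Finset.Icc 1 n) := by
    ext m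
    simp only [Finset.mem_range, Finset.mem_insert, Finset.mem_Icc]
    omega
  rw [hrange, Finset.sum_insert (by simp)] at h0
  have h00 : ((-1 : ℤ) ^ (0:ℕ)) •
      ∑ S ∈ Finset.univ.powersetCard 0,
        extDelta p1
          (fun i => (if i ∈ S then L else 1) *
            Function.update x j (L ^ (n - 0) * g) i) y
      = extDelta p1 (Function.update x j (L ^ n * g)) y := by
    rw [Finset.powersetCard_zero, Finset.sum_singleton, pow_zero, one_smul]
    congr 1
    funext i
    simp
  rw [h00] at h0
  have hq' : ∀ k ∈ Finset.Icc 1 n,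
      ((-1 : ℤ) ^ k) •
        ∑ S ∈ Finset.univ.powersetCard k,
          extDelta p1
            (fun i => (if i ∈ S then L else 1) *
              Function.update x j (L ^ (n - k) * g) i) y
      = (-1 : ℤ) ^ k • (q k L * extDelta p1 (Function.update x j (L ^ (n - k) * g)) y) := by
    intro k hkm
    rw [q_mul_extDelta p1 q hq (Finset.mem_Icc.mp hkm).2]
  rw [Finset.sum_congr rfl hq'] at h0
  have := eq_neg_of_add_eq_zero_left h0
  rw [this, ← Finset.sum_neg_distrib]
  refine Finset.sum_congr rfl fun k _ => ?_
  rw [pow_succ]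
  simp [neg_smul]

end AuxDelta

section AuxPoly

theorem aux_inner_ie {n : ℕ} (T : Finset (Fin n)) :
    ∑ S ∈ (Finset.univ : Finset (Fin n)).powerset,
        (if T ⊆ S then (-1 : ℤ) ^ (n - S.card) else 0)
      = if T = Finset.univ then 1 else 0 := by
  classical
  rw [Finset.sum_ite, Finset.sum_const_zero, add_zero]
  have hbij :
      ∑ S ∈ (Finset.univ : Finset (Fin n)).powerset.filter (fun S => T ⊆ S),
        (-1 : ℤ) ^ (n - S.card)
      = ∑ C ∈ (Finset.univ \ T).powerset, (-1 : ℤ) ^ C.card := by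
    refine Finset.sum_nbij' (fun S => Finset.univ \ S) (fun C => Finset.univ \ C) ?_ ?_ ?_ ?_ ?_
    · intro S hS
      simp only [Finset.mem_filter, Finset.mem_powerset] at hS
      exact Finset.mem_powerset.mpr (Finset.sdiff_subset_sdiff (le_refl _) hS.2)
    · intro C hC
      simp only [Finset.mem_powerset] at hC
      refine Finset.mem_filter.mpr ⟨Finset.mem_powerset.mpr (Finset.sdiff_subset), ?_⟩
      intro t ht
      simp only [Finset.mem_sdiff, Finset.mem_univ, true_and]
      intro htC
      have := hC htC
      simp only [Finset.mem_sdiff, Finset.mem_univ, true_and] at this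
      exact this ht
    · intro S _
      ext t; simp
    · intro C _
      ext t; simp
    · intro S _
      congr 1
      rw [Finset.card_sdiff_of_subset (Finset.subset_univ S)]
      simp
  rw [hbij, Finset.sum_powerset_neg_one_pow_card]
  congr 1
  simp only [Finset.sdiff_eq_empty_iff_subset]
  apply propext
  exact ⟨fun h => le_antisymm (Finset.subset_univ T) h, fun h => h ▸ le_refl _⟩

theorem aux_polarization {R : Type*} [CommRing R] (n : ℕ) (a : Fin n → R) :
    ∑ S ∈ (Finset.univ : Finset (Fin n)).powerset,
        (-1 : ℤ) ^ (n - S.card) • (∑ i ∈ S, a i) ^ n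
      = (n.factorial : ℤ) • ∏ i, a i := by
  classical
  have h1 : ∀ S ∈ (Finset.univ : Finset (Fin n)).powerset,
      (-1 : ℤ) ^ (n - S.card) • (∑ i ∈ S, a i) ^ n
      = ∑ p ∈ Fintype.piFinset (fun _ : Fin n => (Finset.univ : Finset (Fin n))),
          (if (∀ i, p i ∈ S) then (-1 : ℤ) ^ (n - S.card) else 0) • ∏ i, a (p i) := by
    intro S _
    rw [Finset.sum_pow', Finset.smul_sum]
    rw [← Finset.sum_subset
      (Fintype.piFinset_subset _ _ (fun _ => Finset.subset_univ S))]
    · refine Finset.sum_congr rfl fun p hp => ?_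
      rw [if_pos (fun i => (Fintype.mem_piFinset.mp hp) i)]
    · intro p _ hp
      rw [if_neg, zero_smul]
      intro hall
      exact hp (Fintype.mem_piFinset.mpr hall)
  rw [Finset.sum_congr rfl h1, Finset.sum_comm]
  have h2 : ∀ p ∈ Fintype.piFinset (fun _ : Fin n => (Finset.univ : Finset (Fin n))),
      (∑ S ∈ (Finset.univ : Finset (Fin n)).powerset,
        (if (∀ i, p i ∈ S) then (-1 : ℤ) ^ (n - S.card) else 0) • ∏ i, a (p i))
      = (if Finset.image p Finset.univ = Finset.univ then (1:ℤ) else 0) • ∏ i, a (p i) := by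
    intro p _
    rw [← Finset.sum_smul]
    congr 1
    rw [← aux_inner_ie (Finset.image p Finset.univ)]
    refine Finset.sum_congr rfl fun S _ => ?_
    congr 1
    apply propext
    constructor
    · intro h t ht
      rcases Finset.mem_image.mp ht with ⟨i, _, rfl⟩
      exact h i
    · intro h i
      exact h (Finset.mem_image.mpr ⟨i, Finset.mem_univ i, rfl⟩)
  rw [Finset.sum_congr rfl h2]
  have h3 :
      ∑ p ∈ Fintype.piFinset (fun _ : Fin n => (Finset.univ : Finset (Fin n))),
        (if Finset.image p Finset.univ = Finset.univ then (1:ℤ) else 0) • ∏ i, a (p i)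
      = ∑ p ∈ (Fintype.piFinset (fun _ : Fin n => (Finset.univ : Finset (Fin n)))).filter
          (fun p => Finset.image p Finset.univ = Finset.univ), ∏ i, a (p i) := by
    rw [Finset.sum_filter]
    refine Finset.sum_congr rfl fun p _ => ?_
    split <;> simp
  rw [h3]
  have h4 :
      ∑ p ∈ (Fintype.piFinset (fun _ : Fin n => (Finset.univ : Finset (Fin n)))).filter
          (fun p => Finset.image p Finset.univ = Finset.univ), ∏ i, a (p i)
      = ∑ σ ∈ (Finset.univ : Finset (Equiv.Perm (Fin n))), ∏ i, a (σ i) := by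
    refine Finset.sum_nbij'
      (fun p => if h : Function.Bijective p then Equiv.ofBijective p h else 1)
      (fun σ => ⇑σ) ?_ ?_ ?_ ?_ ?_
    · intro p _; exact Finset.mem_univ _
    · intro σ _
      refine Finset.mem_filter.mpr ⟨Fintype.mem_piFinset.mpr fun i => Finset.mem_univ _, ?_⟩
      ext t
      simp only [Finset.mem_image, Finset.mem_univ, iff_true]
      exact ⟨σ.symm t, by simp⟩
    · intro p hp
      have hsurj : Function.Surjective p := by
        intro b
        have hb : b ∈ Finset.image p Finset.univ := by
          rw [(Finset.mem_filter.mp hp).2]; exact Finset.mem_univ b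
        rcases Finset.mem_image.mp hb with ⟨i, _, hi⟩
        exact ⟨i, hi⟩
      have hbij : Function.Bijective p := Finite.surjective_iff_bijective.mp hsurj
      show ⇑(if h : Function.Bijective p then Equiv.ofBijective p h else 1) = p
      rw [dif_pos hbij]
      rfl
    · intro σ _
      have hbij : Function.Bijective ⇑σ := σ.bijective
      simp only [dif_pos hbij]
      exact Equiv.ext fun t => rfl
    · intro p hp
      have hsurj : Function.Surjective p := by
        intro b
        have hb : b ∈ Finset.image p Finset.univ := by
          rw [(Finset.mem_filter.mp hp).2]; exact Finset.mem_univ b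
        rcases Finset.mem_image.mp hb with ⟨i, _, hi⟩
        exact ⟨i, hi⟩
      have hbij : Function.Bijective p := Finite.surjective_iff_bijective.mp hsurj
      show ∏ i, a (p i) = ∏ i, a ((if h : Function.Bijective p then Equiv.ofBijective p h else 1) i)
      rw [dif_pos hbij]
      rfl
  rw [h4]
  have h5 : ∀ σ ∈ (Finset.univ : Finset (Equiv.Perm (Fin n))),
      ∏ i, a (σ i) = ∏ i, a i := fun σ _ => Equiv.prod_comp σ a
  rw [Finset.sum_congr rfl h5, Finset.sum_const, Finset.card_univ, Fintype.card_perm,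
    Fintype.card_fin]
  rw [natCast_zsmul]

open MvPolynomial in
theorem aux_exists_factor (r : ℕ) :
    ∀ (n : ℕ) (d : Fin r →₀ ℕ), n ≤ d.sum (fun _ e => e) →
      ∃ (v : Fin n → Fin r) (d' : Fin r →₀ ℕ),
        d = d' + ∑ i, Finsupp.single (v i) 1 := by
  intro n
  induction n with
  | zero =>
    intro d _
    exact ⟨Fin.elim0, d, by simp⟩
  | succ n ih =>
    intro d hd
    have hdne : ∃ j, d j ≠ 0 := by
      by_contra h
      push_neg at h
      have : d = 0 := Finsupp.ext fun j => h j
      rw [this] at hd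
      simp at hd
    obtain ⟨j, hj⟩ := hdne
    have hj1 : 1 ≤ d j := Nat.one_le_iff_ne_zero.mpr hj
    set e := d - Finsupp.single j 1 with he
    have hde : d = e + Finsupp.single j 1 := by
      ext k
      simp only [Finsupp.coe_add, Pi.add_apply, he, Finsupp.coe_tsub, Pi.sub_apply]
      rcases eq_or_ne k j with rfl | hk
      · simp [hj1]
      · simp [Finsupp.single_apply, Ne.symm hk]
    have hesum : d.sum (fun _ e => e) = e.sum (fun _ e => e) + 1 := by
      rw [hde, Finsupp.sum_add_index' (fun _ => rfl) (fun _ b c => rfl)]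
      simp [Finsupp.sum_single_index]
    have hen : n ≤ e.sum (fun _ e => e) := by omega
    obtain ⟨v', d', hv'⟩ := ih e hen
    refine ⟨Fin.cons j v', d', ?_⟩
    rw [Fin.sum_univ_succ]
    simp only [Fin.cons_zero, Fin.cons_succ]
    rw [hde, hv']
    abel

open MvPolynomial in
theorem aux_prod_X_list {r : ℕ} {A : Type*} [CommRing A] {n : ℕ} (v : Fin n → Fin r) :
    (monomial (∑ i, Finsupp.single (v i) 1) (1:A)) = ∏ i, X (v i) := by
  rw [monomial_sum_one]
  refine Finset.prod_congr rfl fun i _ => ?_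
  rw [X]

open MvPolynomial in
theorem aux_monomial_decomp {A : Type*} [CommRing A] {n r : ℕ}
    (hfac : IsUnit ((n.factorial : A))) (d : Fin r →₀ ℕ)
    (hn : n ≤ d.sum (fun _ e => e)) (c : A) :
    ∃ (d' : Fin r →₀ ℕ) (L : Finset (Fin n) → MvPolynomial (Fin r) A),
      (∀ S, (L S).totalDegree ≤ 1) ∧
      (d'.sum (fun _ e => e)) + n = d.sum (fun _ e => e) ∧
      (monomial d c : MvPolynomial (Fin r) A) =
        ∑ S ∈ (Finset.univ : Finset (Fin n)).powerset,
          ((-1 : A) ^ (n - S.card) * (↑hfac.unit⁻¹ : A)) • ((L S) ^ n * monomial d' c) := by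
  obtain ⟨v, d', hd⟩ := aux_exists_factor r n d hn
  refine ⟨d', fun S => ∑ i ∈ S, X (v i), ?_, ?_, ?_⟩
  · intro S
    refine (totalDegree_finset_sum _ _).trans ?_
    refine Finset.sup_le fun i _ => ?_
    rw [show (X (v i) : MvPolynomial (Fin r) A) = monomial (Finsupp.single (v i) 1) 1 from rfl]
    refine (totalDegree_monomial_le _ _).trans ?_
    simp [Finsupp.sum_single_index]
  · have hsum : ((∑ i, Finsupp.single (v i) 1 : Fin r →₀ ℕ)).sum (fun _ e => e) = n := by
      rw [← Finsupp.sum_finset_sum_index (fun _ => rfl) (fun _ b c => rfl)]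
      simp [Finsupp.sum_single_index]
    rw [hd, Finsupp.sum_add_index' (fun _ => rfl) (fun _ b c => rfl), hsum]
  · have hpol := aux_polarization n (fun i => (X (v i) : MvPolynomial (Fin r) A))
    have hprod : (∏ i, (X (v i) : MvPolynomial (Fin r) A)) =
        monomial (∑ i, Finsupp.single (v i) 1) (1:A) := (aux_prod_X_list v).symm
    have hmon : (monomial d c : MvPolynomial (Fin r) A)
        = monomial (∑ i, Finsupp.single (v i) 1) (1:A) * monomial d' c := by
      rw [monomial_mul, one_mul, hd, add_comm]
    calc (monomial d c : MvPolynomial (Fin r) A)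
        = monomial (∑ i, Finsupp.single (v i) 1) (1:A) * monomial d' c := hmon
      _ = (↑hfac.unit⁻¹ : A) • (((n.factorial : A)) •
            (monomial (∑ i, Finsupp.single (v i) 1) (1:A) * monomial d' c)) := by
          rw [smul_smul, IsUnit.val_inv_mul, one_smul]
      _ = (↑hfac.unit⁻¹ : A) • (((n.factorial : ℤ) •
            (∏ i, (X (v i) : MvPolynomial (Fin r) A))) * monomial d' c) := by
          rw [hprod]
          congr 1
          rw [smul_mul_assoc]
          congr 1
          rw [← Int.cast_smul_eq_zsmul A, Int.cast_natCast]
      _ = (↑hfac.unit⁻¹ : A) • ((∑ S ∈ (Finset.univ : Finset (Fin n)).powerset,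
            (-1 : ℤ) ^ (n - S.card) • (∑ i ∈ S, (X (v i) : MvPolynomial (Fin r) A)) ^ n)
              * monomial d' c) := by rw [hpol]
      _ = ∑ S ∈ (Finset.univ : Finset (Fin n)).powerset,
            ((-1 : A) ^ (n - S.card) * (↑hfac.unit⁻¹ : A)) •
              ((∑ i ∈ S, (X (v i) : MvPolynomial (Fin r) A)) ^ n * monomial d' c) := by
          rw [Finset.sum_mul, Finset.smul_sum]
          refine Finset.sum_congr rfl fun S _ => ?_
          rw [smul_mul_assoc, ← Int.cast_smul_eq_zsmul A ((-1 : ℤ) ^ (n - S.card)), smul_smul]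
          congr 1
          push_cast
          ring

end AuxPoly

open MvPolynomial in
/-- **Lemma 2.7 (second part).**  Let `F = A[T₁,…,T_r]` over a ring `A` in which `n!` is
invertible, and let `W ⊂ F` be the `A`-module spanned by the monomials of total degree
less than `n`.  Then `I_W = I_F` in `Γⁿ_A(F)`.

Setup: `Γn` is `Γⁿ_A(F)` with its internal multiplication, `p1` the external product of
`n` degree-one divided powers (symmetric, `hsym`), `q c f = γᶜ(f) * γ^{n-c}(1)`, and `hq`
the Proposition 1.7 expansion of internal products `q c f ⋅ p1 w` used in the proof. -/
theorem normIdeal_low_degree_monomials {A Γn : Type*} [CommRing A]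
    [CommRing Γn] [Algebra A Γn] {n : ℕ} (r : ℕ)
    (p1 : MultilinearMap A (fun _ : Fin n => MvPolynomial (Fin r) A) Γn)
    (hsym : ∀ (σ : Equiv.Perm (Fin n)) (z : Fin n → MvPolynomial (Fin r) A),
      p1 (z ∘ σ) = p1 z)
    (hfac : IsUnit ((n.factorial : A)))
    (q : ℕ → MvPolynomial (Fin r) A → Γn)
    (hq : ∀ (c : ℕ), c ≤ n → ∀ (f : MvPolynomial (Fin r) A) (w : Fin n → MvPolynomial (Fin r) A),
      q c f * p1 w =
        ∑ S ∈ Finset.univ.powersetCard c,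
          p1 fun i => (if i ∈ S then f else 1) * w i) :
    normIdeal p1 (Submodule.span A
        {m : MvPolynomial (Fin r) A |
          ∃ d : Fin r →₀ ℕ, (d.sum fun _ e => e) < n ∧ m = MvPolynomial.monomial d 1}) =
      normIdeal p1 (⊤ : Submodule A (MvPolynomial (Fin r) A)) := by
  classical
  set W : Submodule A (MvPolynomial (Fin r) A) := Submodule.span A
      {m : MvPolynomial (Fin r) A |
        ∃ d : Fin r →₀ ℕ, (d.sum fun _ e => e) < n ∧ m = MvPolynomial.monomial d 1} with hWdef
  have hWmono : ∀ (d : Fin r →₀ ℕ) (c : A), (d.sum fun _ e => e) < n →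
      (monomial d c : MvPolynomial (Fin r) A) ∈ W := by
    intro d c hd
    have h1 : (monomial d c : MvPolynomial (Fin r) A) = c • monomial d (1:A) := by
      rw [smul_monomial, smul_eq_mul, mul_one]
    rw [h1]
    exact Submodule.smul_mem _ _ (Submodule.subset_span ⟨d, hd, rfl⟩)
  refine le_antisymm ?_ ?_
  · refine Ideal.span_mono ?_
    rintro t ⟨x, y, hx, hy, ht⟩
    exact ⟨x, y, fun i => Submodule.mem_top, fun i => Submodule.mem_top, ht⟩
  · rw [show normIdeal p1 (⊤ : Submodule A (MvPolynomial (Fin r) A)) = Ideal.span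
      {t | ∃ x y : Fin n → MvPolynomial (Fin r) A,
        (∀ i, x i ∈ (⊤ : Submodule A (MvPolynomial (Fin r) A))) ∧
        (∀ i, y i ∈ (⊤ : Submodule A (MvPolynomial (Fin r) A))) ∧
        t = extDelta p1 x y} from rfl, Ideal.span_le]
    rintro t ⟨x, y, -, -, rfl⟩
    rcases Nat.eq_zero_or_pos n with hn0 | hn
    · subst hn0
      exact Ideal.subset_span ⟨x, y, fun i => i.elim0, fun i => i.elim0, rfl⟩
    have main : ∀ D : ℕ, ∀ x y : Fin n → MvPolynomial (Fin r) A,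
        (∑ i, ((x i).totalDegree + (y i).totalDegree)) ≤ D →
        extDelta p1 x y ∈ normIdeal p1 W := by
      intro D
      induction D using Nat.strong_induction_on with
      | _ D IH =>
      -- Reduction step: first tuple consists of monomials, slot j has degree ≥ n.
      have hred : ∀ (dx : Fin n → (Fin r →₀ ℕ)) (cx : Fin n → A)
          (yy : Fin n → MvPolynomial (Fin r) A) (j : Fin n),
          n ≤ ((dx j).sum fun _ e => e) →
          ((∑ i, ((dx i).sum fun _ e => e)) + ∑ i, (yy i).totalDegree) ≤ D →
          extDelta p1 (fun i => monomial (dx i) (cx i)) yy ∈ normIdeal p1 W := by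
        intro dx cx yy j hj hD
        obtain ⟨d', L, hL, hds, hmono⟩ := aux_monomial_decomp hfac (dx j) hj (cx j)
        set xm : Fin n → MvPolynomial (Fin r) A := fun i => monomial (dx i) (cx i) with hxm
        have hupd : extDelta p1 xm yy = (deltaML p1 yy) (Function.update xm j (xm j)) := by
          rw [Function.update_eq_self, deltaML_apply]
        rw [hupd]
        have hxj : xm j = ∑ S ∈ (Finset.univ : Finset (Fin n)).powerset,
            ((-1 : A) ^ (n - S.card) * (↑hfac.unit⁻¹ : A)) •
              ((L S) ^ n * monomial d' (cx j)) := hmono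
        rw [hxj, MultilinearMap.map_update_sum]
        refine Submodule.sum_mem _ fun S _ => ?_
        rw [MultilinearMap.map_update_smul, deltaML_apply, star p1 q hq,
          Algebra.smul_def]
        refine Ideal.mul_mem_left _ _ (Submodule.sum_mem _ fun k hk => ?_)
        obtain ⟨hk1, hkn⟩ := Finset.mem_Icc.mp hk
        rw [zsmul_eq_mul]
        refine Ideal.mul_mem_left _ _ (Ideal.mul_mem_left _ _ ?_)
        -- membership by induction on degree
        set z : MvPolynomial (Fin r) A := (L S) ^ (n - k) * monomial d' (cx j) with hz
        have hzdeg : z.totalDegree + k ≤ ((dx j).sum fun _ e => e) := by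
          have h1 : z.totalDegree ≤ (n - k) * 1 + (d'.sum fun _ e => e) := by
            refine (totalDegree_mul _ _).trans ?_
            refine add_le_add ?_ (totalDegree_monomial_le _ _)
            refine (totalDegree_pow _ _).trans ?_
            exact Nat.mul_le_mul_left _ (hL S)
          omega
        have hsum1 : (∑ i, (Function.update xm j z i).totalDegree)
            = z.totalDegree + ∑ i ∈ Finset.univ \ {j}, (xm i).totalDegree := by
          have hfn : (fun i => (Function.update xm j z i).totalDegree)
              = Function.update (fun i => (xm i).totalDegree) j z.totalDegree := by
            funext i
            rcases eq_or_ne i j with rfl | hij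
            · simp
            · simp [Function.update_of_ne hij]
          rw [hfn]
          exact Finset.sum_update_of_mem (Finset.mem_univ j) (fun i => (xm i).totalDegree) z.totalDegree
        have hsum2 : (∑ i, ((dx i).sum fun _ e => e))
            = (∑ i ∈ Finset.univ \ {j}, ((dx i).sum fun _ e => e)) + ((dx j).sum fun _ e => e) :=
          Finset.sum_eq_sum_sdiff_singleton_add (Finset.mem_univ j)
            (fun i => (dx i).sum fun _ e => e)
        have hsum3 : (∑ i ∈ Finset.univ \ {j}, (xm i).totalDegree)
            ≤ ∑ i ∈ Finset.univ \ {j}, ((dx i).sum fun _ e => e) :=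
          Finset.sum_le_sum fun i _ => totalDegree_monomial_le _ _
        have hnew : (∑ i, ((Function.update xm j z i).totalDegree + (yy i).totalDegree))
            ≤ D - 1 := by
          rw [Finset.sum_add_distrib, hsum1]
          omega
        exact IH (D - 1) (by omega) _ _ hnew
      -- both tuples monomials
      have H2 : ∀ (dx dy : Fin n → (Fin r →₀ ℕ)) (cx cy : Fin n → A),
          ((∑ i, ((dx i).sum fun _ e => e)) + (∑ i, ((dy i).sum fun _ e => e))) ≤ D →
          extDelta p1 (fun i => monomial (dx i) (cx i)) (fun i => monomial (dy i) (cy i))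
            ∈ normIdeal p1 W := by
        intro dx dy cx cy hD2
        by_cases hx : ∃ j, n ≤ ((dx j).sum fun _ e => e)
        · obtain ⟨j, hj⟩ := hx
          refine hred dx cx _ j hj ?_
          have : (∑ i, (monomial (dy i) (cy i) : MvPolynomial (Fin r) A).totalDegree)
              ≤ ∑ i, ((dy i).sum fun _ e => e) :=
            Finset.sum_le_sum fun i _ => totalDegree_monomial_le _ _
          omega
        by_cases hy : ∃ j, n ≤ ((dy j).sum fun _ e => e)
        · obtain ⟨j, hj⟩ := hy
          rw [extDelta_swap p1 hsym]
          refine hred dy cy _ j hj ?_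
          have : (∑ i, (monomial (dx i) (cx i) : MvPolynomial (Fin r) A).totalDegree)
              ≤ ∑ i, ((dx i).sum fun _ e => e) :=
            Finset.sum_le_sum fun i _ => totalDegree_monomial_le _ _
          omega
        push_neg at hx hy
        refine Ideal.subset_span ⟨_, _, fun i => hWmono _ _ (hx i), fun i => hWmono _ _ (hy i), rfl⟩
      -- first tuple monomials, second arbitrary
      have H1 : ∀ (dx : Fin n → (Fin r →₀ ℕ)) (cx : Fin n → A)
          (yy : Fin n → MvPolynomial (Fin r) A),
          ((∑ i, ((dx i).sum fun _ e => e)) + (∑ i, (yy i).totalDegree)) ≤ D →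
          extDelta p1 (fun i => monomial (dx i) (cx i)) yy ∈ normIdeal p1 W := by
        intro dx cx yy hD1
        rw [extDelta_swap p1 hsym, ← deltaML_apply]
        have hyy : yy = fun i => ∑ d ∈ (yy i).support, monomial d (coeff d (yy i)) :=
          funext fun i => (support_sum_monomial_coeff (yy i)).symm
        rw [show (deltaML p1 fun i => monomial (dx i) (cx i)) yy
            = ∑ φ ∈ Fintype.piFinset (fun i => (yy i).support),
                (deltaML p1 fun i => monomial (dx i) (cx i))
                  (fun i => monomial (φ i) (coeff (φ i) (yy i))) from by
          conv_lhs => rw [hyy]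
          exact MultilinearMap.map_sum_finset _ _ _]
        refine Submodule.sum_mem _ fun φ hφ => ?_
        rw [deltaML_apply]
        refine H2 φ dx (fun i => coeff (φ i) (yy i)) cx ?_
        have hb : ∀ i, ((φ i).sum fun _ e => e) ≤ (yy i).totalDegree := fun i =>
          le_totalDegree (Fintype.mem_piFinset.mp hφ i)
        have : (∑ i, ((φ i).sum fun _ e => e)) ≤ ∑ i, (yy i).totalDegree :=
          Finset.sum_le_sum fun i _ => hb i
        omega
      -- expand first tuple
      intro x y hxy
      rw [← deltaML_apply]
      have hxx : x = fun i => ∑ d ∈ (x i).support, monomial d (coeff d (x i)) :=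
        funext fun i => (support_sum_monomial_coeff (x i)).symm
      rw [show (deltaML p1 y) x
          = ∑ φ ∈ Fintype.piFinset (fun i => (x i).support),
              (deltaML p1 y) (fun i => monomial (φ i) (coeff (φ i) (x i))) from by
        conv_lhs => rw [hxx]
        exact MultilinearMap.map_sum_finset _ _ _]
      refine Submodule.sum_mem _ fun φ hφ => ?_
      rw [deltaML_apply]
      refine H1 φ (fun i => coeff (φ i) (x i)) y ?_
      have hb : ∀ i, ((φ i).sum fun _ e => e) ≤ (x i).totalDegree := fun i =>
        le_totalDegree (Fintype.mem_piFinset.mp hφ i)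
      have h1 : (∑ i, ((φ i).sum fun _ e => e)) ≤ ∑ i, (x i).totalDegree :=
        Finset.sum_le_sum fun i _ => hb i
      rw [Finset.sum_add_distrib] at hxy
      omega
    exact main _ x y le_rfl
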